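/- Let L = {R, G, X, Y} and S_26 = {RRX, RXX, RYY, GYX, GXX, YYX, XXX}. If L' ⊊ L is such that Forb_c(S_26) is a semi-free amalgamation class with set of solutions L', then L' = {R, G, Y}. -/
import Mathlib


namespace Paper

variable {L M : Type}

/-- The structure with colouring `r` embeds no triangle from `S`
(triangles identified with the multiset of their three edge colours). -/
def Avoids (r : M → M → L) (S : Set (Multiset L)) : Prop :=
  ∀ a b c : M, a ≠ b → a ≠ c → b ≠ c → ({r a b, r a c, r b c} : Multiset L) ∉ S

/-- The substructure on `T` embeds no triangle from `S`. -/
def AvoidsOn (r : M → M → L) (T : Set M) (S : Set (Multiset L)) : Prop :=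
  ∀ a ∈ T, ∀ b ∈ T, ∀ c ∈ T, a ≠ b → a ≠ c → b ≠ c →
    ({r a b, r a c, r b c} : Multiset L) ∉ S

/-- Colouring the pair `(a,c)` by `R` creates no forbidden triangle over a point of `B`. -/
def Compatible (r : M → M → L) (S : Set (Multiset L)) (B : Set M) (a c : M) (R : L) : Prop :=
  ∀ b ∈ B, ({r a b, r b c, R} : Multiset L) ∉ S

/-- `R` is the greatest relation of `L'` (in the priority order `le`) whose use on the
pair `(a,c)` creates no forbidden triangle over `B`. -/
def PriorityColour (le : L → L → Prop) (r : M → M → L) (S : Set (Multiset L)) (L' : Set L)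
    (B : Set M) (a c : M) (R : L) : Prop :=
  (R ∈ L' ∧ Compatible r S B a c R) ∧
    ∀ R' : L, R' ∈ L' → Compatible r S B a c R' → le R' R

/-- `A ⫫_B C`: the substructure on `A ∪ B ∪ C` is the prioritised semi-free amalgam
`(A ∪ B) ⊗_B (B ∪ C)`. -/
def Indep (le : L → L → Prop) (r : M → M → L) (S : Set (Multiset L)) (L' : Set L)
    (A B C : Set M) : Prop :=
  A ∩ C ⊆ B ∧ ∀ a ∈ A, a ∉ B → ∀ c ∈ C, c ∉ B → PriorityColour le r S L' B a c (r a c)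

/-- Whenever the prioritised semi-free amalgam `A ⊗_B C` of members of `Forb_c(S)` is
defined, it lies in `Forb_c(S)`.  (The amalgam is represented by a finite vertex type
`V = A ∪ C` with `B = A ∩ C`, whose cross edges are coloured by the priority rule.) -/
def AmalgamAvoids (le : L → L → Prop) (S : Set (Multiset L)) (L' : Set L) : Prop :=
  ∀ (V : Type) [Fintype V] (rr : V → V → L) (A C : Set V),
    (∀ a b, rr a b = rr b a) → A ∪ C = Set.univ →
    AvoidsOn rr A S → AvoidsOn rr C S →
    (∀ a ∈ A \ C, ∀ c ∈ C \ A, PriorityColour le rr S L' (A ∩ C) a c (rr a c)) →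
    Avoids rr S

/-- The prioritised semi-free amalgam of members of `Forb_c(S)` is always defined. -/
def AmalgamDefined (le : L → L → Prop) (S : Set (Multiset L)) (L' : Set L) : Prop :=
  ∀ (V : Type) [Fintype V] (rr : V → V → L) (A C : Set V),
    (∀ a b, rr a b = rr b a) → A ∪ C = Set.univ →
    AvoidsOn rr A S → AvoidsOn rr C S →
    ∀ a ∈ A \ C, ∀ c ∈ C \ A, ∃ R : L, PriorityColour le rr S L' (A ∩ C) a c R

/-- `Forb_c(S)` is a prioritised semi-free amalgamation class w.r.t. the order `le` on `L'`. -/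
def IsPrioritisedSemiFree (le : L → L → Prop) (S : Set (Multiset L)) (L' : Set L) : Prop :=
  AmalgamDefined le S L' ∧ AmalgamAvoids le S L'

/-- `Forb_c(S)` is a semi-free amalgamation class with set of solutions `L'`. -/
def IsSemiFree (S : Set (Multiset L)) (L' : Set L) : Prop :=
  ∀ (V : Type) [Fintype V] (rr : V → V → L) (A C : Set V),
    (∀ a b, rr a b = rr b a) → A ∪ C = Set.univ →
    AvoidsOn rr A S → AvoidsOn rr C S →
    ∃ rr' : V → V → L, (∀ a b, rr' a b = rr' b a) ∧ Avoids rr' S ∧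
      (∀ a ∈ A, ∀ b ∈ A, rr' a b = rr a b) ∧
      (∀ a ∈ C, ∀ b ∈ C, rr' a b = rr a b) ∧
      (∀ a ∈ A \ C, ∀ c ∈ C \ A, rr' a c ∈ L')

/-- `Forb_c(S)` has the amalgamation property (with joint embedding as the case
of empty intersection); it is then an amalgamation class. -/
def HasAmalgamation (S : Set (Multiset L)) : Prop :=
  ∀ (V : Type) [Fintype V] (rr : V → V → L) (A C : Set V),
    (∀ a b, rr a b = rr b a) → A ∪ C = Set.univ →
    AvoidsOn rr A S → AvoidsOn rr C S →
    ∃ rr' : V → V → L, (∀ a b, rr' a b = rr' b a) ∧ Avoids rr' S ∧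
      (∀ a ∈ A, ∀ b ∈ A, rr' a b = rr a b) ∧
      (∀ a ∈ C, ∀ b ∈ C, rr' a b = rr a b)

/-- `(M, r)` is the Fraïssé limit of `Forb_c(S)`: a countable structure whose complete
edge-colouring avoids `S`, which is homogeneous, and which satisfies the extension
property with respect to members of `Forb_c(S)`. -/
structure IsLimit (S : Set (Multiset L)) (r : M → M → L) : Prop where
  countable : Countable M
  symm : ∀ a b : M, r a b = r b a
  avoids : Avoids r S
  extension : ∀ (n : ℕ) (c : Fin n → Fin n → L), (∀ i j, c i j = c j i) →
    Avoids c S → ∀ (A : Finset (Fin n)) (f : Fin n → M), Set.InjOn f ↑A →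
    (∀ i ∈ A, ∀ j ∈ A, i ≠ j → r (f i) (f j) = c i j) →
    ∃ g : Fin n ↪ M, (∀ i ∈ A, g i = f i) ∧ ∀ i j : Fin n, i ≠ j → r (g i) (g j) = c i j
  homogeneous : ∀ (A : Finset M) (f : M → M), Set.InjOn f ↑A →
    (∀ a ∈ A, ∀ b ∈ A, r (f a) (f b) = r a b) →
    ∃ g : Equiv.Perm M, (∀ x y, r (g x) (g y) = r x y) ∧ ∀ a ∈ A, g a = f a

/-- The automorphism group of the coloured structure `(M, r)`, as a subgroup of `Perm M`. -/
def aut (r : M → M → L) : Subgroup (Equiv.Perm M) where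
  carrier := {g : Equiv.Perm M | ∀ a b, r (g a) (g b) = r a b}
  one_mem' := fun _ _ => rfl
  mul_mem' := by
    intro g h hg hh a b
    have : r (g (h a)) (g (h b)) = r a b := (hg (h a) (h b)).trans (hh a b)
    simpa [Equiv.Perm.mul_apply] using this
  inv_mem' := by
    intro g hg a b
    have := hg (g⁻¹ a) (g⁻¹ b)
    simpa using this.symm

/-- The pointwise stabiliser `G_(X)` of `X` inside `Aut(M, r)`. -/
def pstab (r : M → M → L) (X : Set M) : Subgroup (aut r) where
  carrier := {g | ∀ x ∈ X, (g : Equiv.Perm M) x = x}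
  one_mem' := fun _ _ => rfl
  mul_mem' := by
    intro g h hg hh x hx
    have : (g : Equiv.Perm M) ((h : Equiv.Perm M) x) = x := by rw [hh x hx, hg x hx]
    simpa [Equiv.Perm.mul_apply] using this
  inv_mem' := by
    intro g hg x hx
    have := hg x hx
    simp only [Subgroup.coe_inv]
    conv_lhs => rw [← this]
    simp

/-- The 1-type of `a` over `X`: its orbit under the pointwise stabiliser of `X`. -/
def typeOf (r : M → M → L) (X : Set M) (a : M) : Set M :=
  {b | ∃ g : Equiv.Perm M, g ∈ aut r ∧ (∀ x ∈ X, g x = x) ∧ g a = b}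

/-- Two `n`-tuples have the same type over `X`: they lie in the same orbit under the
pointwise stabiliser of `X`. -/
def SameTypeFn (r : M → M → L) (X : Set M) {n : ℕ} (a b : Fin n → M) : Prop :=
  ∃ g : Equiv.Perm M, g ∈ aut r ∧ (∀ x ∈ X, g x = x) ∧ ∀ i, g (a i) = b i

/-- `f` moves almost maximally: every 1-type over every finite set `X` has a
realisation `b` with `b ⫫_X f(b)`. -/
def MovesAlmostMaximally (le : L → L → Prop) (r : M → M → L) (S : Set (Multiset L))
    (L' : Set L) (f : Equiv.Perm M) : Prop :=
  ∀ (X : Finset M) (a : M), ∃ b ∈ typeOf r ↑X a, Indep le r S L' {b} ↑X {f b}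

/-- The commutator `[x, y] = x⁻¹y⁻¹xy`. -/
def Comm {G : Type*} [Group G] (x y : G) : G := x⁻¹ * y⁻¹ * x * y

/-- `le` is a linear order on the subset `L'`. -/
def IsLinearOn (le : L → L → Prop) (L' : Set L) : Prop :=
  (∀ a ∈ L', le a a) ∧
  (∀ a ∈ L', ∀ b ∈ L', ∀ c ∈ L', le a b → le b c → le a c) ∧
  (∀ a ∈ L', ∀ b ∈ L', le a b → le b a → a = b) ∧
  (∀ a ∈ L', ∀ b ∈ L', le a b ∨ le b a)

/-- `R1 > R2` are the two greatest relations of `L'` in the order `le`. -/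
def TwoGreatest (le : L → L → Prop) (L' : Set L) (R1 R2 : L) : Prop :=
  R1 ∈ L' ∧ R2 ∈ L' ∧ R2 ≠ R1 ∧ le R2 R1 ∧
    (∀ R ∈ L', le R R1) ∧ ∀ R ∈ L', R ≠ R1 → le R R2

/-- Condition A (i): no triangle of `S` contains two occurrences of `R1`,
or an `R1` together with an `R2`. -/
def CondA1 (S : Set (Multiset L)) (R1 R2 : L) : Prop :=
  ∀ t ∈ S, ¬ (({R1, R1} : Multiset L) ≤ t) ∧ ¬ (({R1, R2} : Multiset L) ≤ t)

/-- Condition A (ii): if `a ⫫_{{b} ∪ B} c` and `r(a,b) ∈ L'` then `a ⫫_B c`. -/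
def CondA2 (le : L → L → Prop) (r : M → M → L) (S : Set (Multiset L)) (L' : Set L) : Prop :=
  ∀ (a b c : M) (B : Finset M), r a b ∈ L' →
    Indep le r S L' {a} (insert b ↑B) {c} → Indep le r S L' {a} ↑B {c}

/-- Condition 1: `S` contains no triangle having two of its three edges in `L'`. -/
def Cond1 (S : Set (Multiset L)) (L' : Set L) : Prop :=
  ∀ t ∈ S, ∀ x ∈ L', ∀ y ∈ L', ¬ (({x, y} : Multiset L) ≤ t)

/-- Condition 2 with respect to `L' = {R1, R2}` (ordered `R1 > R2`) and the subsets
`Lst = L*` and `Lhat = L̂`. -/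
def Cond2 (S : Set (Multiset L)) (R1 R2 : L) (Lst Lhat : Set L) : Prop :=
  R1 ≠ R2 ∧ R1 ∉ Lst ∧ R2 ∉ Lst ∧ R1 ∉ Lhat ∧ R2 ∉ Lhat ∧ (∀ x ∈ Lst, x ∉ Lhat) ∧
  (∀ R' : L, R' ∉ Lhat → R' ≠ R2 → ∀ Ra ∈ Lst, ∀ Rb ∈ Lst,
    ({R', Ra, Rb} : Multiset L) ∈ S) ∧
  (∀ Ra ∈ Lst, ({R2, R2, Ra} : Multiset L) ∈ S) ∧
  (∀ Rh ∈ Lhat, ∀ Ra ∈ Lst, ({R2, Rh, Ra} : Multiset L) ∈ S) ∧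
  (∀ t ∈ S, R1 ∈ t → ∃ Ra ∈ Lst, ∃ Rb ∈ Lst, t = ({R1, Ra, Rb} : Multiset L)) ∧
  (∀ t ∈ S, ({R2, R2} : Multiset L) ≤ t → ∃ Ra ∈ Lst, t = ({R2, R2, Ra} : Multiset L))


/-- The language `L = {R, G, X, Y}` of four binary, symmetric, irreflexive
relation symbols. -/
inductive C4 : Type
  | R | G | X | Y
deriving DecidableEq

/-- The set of forbidden triangles of case #26:
`S_26 = {RRX, RXX, RYY, GYX, GXX, YYX, XXX}`. -/
def S26 : Set (Multiset C4) :=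
  {({C4.R, C4.R, C4.X} : Multiset C4), ({C4.R, C4.X, C4.X} : Multiset C4),
   ({C4.R, C4.Y, C4.Y} : Multiset C4), ({C4.G, C4.Y, C4.X} : Multiset C4),
   ({C4.G, C4.X, C4.X} : Multiset C4), ({C4.Y, C4.Y, C4.X} : Multiset C4),
   ({C4.X, C4.X, C4.X} : Multiset C4)}

/-- The rank realising the priority order `G > R > Y` (with `X` at the bottom). -/
def rank26 : C4 → ℕ
  | C4.G => 3
  | C4.R => 2
  | C4.Y => 1
  | C4.X => 0

/-- The priority order `G > R > Y` on `L' = {R, G, Y}`. -/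
def le26 (x y : C4) : Prop := rank26 x ≤ rank26 y

instance instDecS26 : DecidablePred (· ∈ S26) := fun t =>
  decidable_of_iff
    (t = {C4.R, C4.R, C4.X} ∨ t = {C4.R, C4.X, C4.X} ∨ t = {C4.R, C4.Y, C4.Y} ∨
     t = {C4.G, C4.Y, C4.X} ∨ t = {C4.G, C4.X, C4.X} ∨ t = {C4.Y, C4.Y, C4.X} ∨
     t = {C4.X, C4.X, C4.X}) (by simp [S26])

/-- Gadget forcing `R` as cross colour. -/
def rRg : Fin 4 → Fin 4 → C4 := fun i j =>
  if (i = 0 ∧ j = 1) ∨ (i = 1 ∧ j = 0) then C4.R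
  else if (i = 0 ∧ j = 2) ∨ (i = 2 ∧ j = 0) then C4.Y
  else if (i = 1 ∧ j = 3) ∨ (i = 3 ∧ j = 1) then C4.R
  else if (i = 2 ∧ j = 3) ∨ (i = 3 ∧ j = 2) then C4.X
  else if (i = 1 ∧ j = 2) ∨ (i = 2 ∧ j = 1) then C4.G
  else C4.R

/-- Gadget forcing `G` as cross colour. -/
def rGg : Fin 4 → Fin 4 → C4 := fun i j =>
  if (i = 0 ∧ j = 1) ∨ (i = 1 ∧ j = 0) then C4.R
  else if (i = 0 ∧ j = 2) ∨ (i = 2 ∧ j = 0) then C4.R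
  else if (i = 1 ∧ j = 3) ∨ (i = 3 ∧ j = 1) then C4.X
  else if (i = 2 ∧ j = 3) ∨ (i = 3 ∧ j = 2) then C4.Y
  else if (i = 1 ∧ j = 2) ∨ (i = 2 ∧ j = 1) then C4.R
  else C4.G

/-- Gadget forcing `Y` as cross colour. -/
def rYg : Fin 3 → Fin 3 → C4 := fun _ _ => C4.X

lemma avoids_rRg : Avoids rRg S26 := by
  have : ∀ a b c : Fin 4, a ≠ b → a ≠ c → b ≠ c →
      ({rRg a b, rRg a c, rRg b c} : Multiset C4) ∉ S26 := by decide
  exact this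

lemma avoids_rGg : Avoids rGg S26 := by
  have : ∀ a b c : Fin 4, a ≠ b → a ≠ c → b ≠ c →
      ({rGg a b, rGg a c, rGg b c} : Multiset C4) ∉ S26 := by decide
  exact this

lemma avoidsOn_of_avoids {V : Type} (rr : V → V → C4) (T : Set V)
    (hA : Avoids rr S26) : AvoidsOn rr T S26 :=
  fun a _ b _ c _ hab hac hbc => hA a b c hab hac hbc

lemma R_mem (L' : Set C4) (h : IsSemiFree S26 L') : C4.R ∈ L' := by
  obtain ⟨rr', hsymm, hAv, h4, h5, hcross⟩ :=
    h (Fin 4) rRg ({0, 1, 2} : Set (Fin 4)) ({1, 2, 3} : Set (Fin 4))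
      (by decide) (by ext x; fin_cases x <;> simp)
      (avoidsOn_of_avoids _ _ avoids_rRg) (avoidsOn_of_avoids _ _ avoids_rRg)
  have e01 : rr' 0 1 = C4.R := by rw [h4 0 (by simp) 1 (by simp)]; rfl
  have e02 : rr' 0 2 = C4.Y := by rw [h4 0 (by simp) 2 (by simp)]; rfl
  have e13 : rr' 1 3 = C4.R := by rw [h5 1 (by simp) 3 (by simp)]; rfl
  have e23 : rr' 2 3 = C4.X := by rw [h5 2 (by simp) 3 (by simp)]; rfl
  have t1 := hAv 0 1 3 (by decide) (by decide) (by decide)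
  have t2 := hAv 0 2 3 (by decide) (by decide) (by decide)
  rw [e01, e13] at t1
  rw [e02, e23] at t2
  have hc := hcross 0 (by constructor <;> simp) 3 (by constructor <;> simp)
  cases hval : rr' 0 3 with
  | R => rwa [hval] at hc
  | G => rw [hval] at t2; exact absurd (by decide) t2
  | X => rw [hval] at t1; exact absurd (by decide) t1
  | Y => rw [hval] at t2; exact absurd (by decide) t2

lemma G_mem (L' : Set C4) (h : IsSemiFree S26 L') : C4.G ∈ L' := by
  obtain ⟨rr', hsymm, hAv, h4, h5, hcross⟩ :=
    h (Fin 4) rGg ({0, 1, 2} : Set (Fin 4)) ({1, 2, 3} : Set (Fin 4))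
      (by decide) (by ext x; fin_cases x <;> simp)
      (avoidsOn_of_avoids _ _ avoids_rGg) (avoidsOn_of_avoids _ _ avoids_rGg)
  have e01 : rr' 0 1 = C4.R := by rw [h4 0 (by simp) 1 (by simp)]; rfl
  have e02 : rr' 0 2 = C4.R := by rw [h4 0 (by simp) 2 (by simp)]; rfl
  have e13 : rr' 1 3 = C4.X := by rw [h5 1 (by simp) 3 (by simp)]; rfl
  have e23 : rr' 2 3 = C4.Y := by rw [h5 2 (by simp) 3 (by simp)]; rfl
  have t1 := hAv 0 1 3 (by decide) (by decide) (by decide)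
  have t2 := hAv 0 2 3 (by decide) (by decide) (by decide)
  rw [e01, e13] at t1
  rw [e02, e23] at t2
  have hc := hcross 0 (by constructor <;> simp) 3 (by constructor <;> simp)
  cases hval : rr' 0 3 with
  | G => rwa [hval] at hc
  | R => rw [hval] at t1; exact absurd (by decide) t1
  | X => rw [hval] at t1; exact absurd (by decide) t1
  | Y => rw [hval] at t2; exact absurd (by decide) t2

lemma Y_mem (L' : Set C4) (h : IsSemiFree S26 L') : C4.Y ∈ L' := by
  have hsmall : ∀ T : Set (Fin 3), (∀ x ∈ T, x = 0 ∨ x = 1) ∨ (∀ x ∈ T, x = 1 ∨ x = 2) →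
      AvoidsOn rYg T S26 := by
    intro T hT a ha b hb c hc hab hac hbc
    rcases hT with hT | hT <;>
      rcases hT a ha with rfl | rfl <;> rcases hT b hb with rfl | rfl <;>
      rcases hT c hc with rfl | rfl <;> simp_all
  obtain ⟨rr', hsymm, hAv, h4, h5, hcross⟩ :=
    h (Fin 3) rYg ({0, 1} : Set (Fin 3)) ({1, 2} : Set (Fin 3))
      (by decide) (by ext x; fin_cases x <;> simp)
      (hsmall _ (Or.inl (by intro x hx; simpa using hx)))
      (hsmall _ (Or.inr (by intro x hx; simpa using hx)))
  have e01 : rr' 0 1 = C4.X := by rw [h4 0 (by simp) 1 (by simp)]; rfl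
  have e12 : rr' 1 2 = C4.X := by rw [h5 1 (by simp) 2 (by simp)]; rfl
  have t1 := hAv 0 1 2 (by decide) (by decide) (by decide)
  rw [e01, e12] at t1
  have hc := hcross 0 (by constructor <;> simp) 2 (by constructor <;> simp)
  cases hval : rr' 0 2 with
  | Y => rwa [hval] at hc
  | R => rw [hval] at t1; exact absurd (by decide) t1
  | G => rw [hval] at t1; exact absurd (by decide) t1
  | X => rw [hval] at t1; exact absurd (by decide) t1

/-- **Lemma.** For case #26, `{R, G, Y}` is the only possible set of solutions: if
`L' ⊊ L` is such that `Forb_c(S_26)` is a semi-free amalgamation class with set of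
solutions `L'`, then `L' = {R, G, Y}`. -/
theorem case26_unique_solution_set (L' : Set C4) (hL' : L' ≠ Set.univ)
    (h : IsSemiFree S26 L') : L' = ({C4.R, C4.G, C4.Y} : Set C4) := by
  have hR := R_mem L' h
  have hG := G_mem L' h
  have hY := Y_mem L' h
  have hX : C4.X ∉ L' := by
    intro hx
    apply hL'
    apply Set.eq_univ_of_forall
    intro x
    cases x <;> assumption
  ext x
  cases x with
  | R => simp [hR]
  | G => simp [hG]
  | Y => simp [hY]
  | X => simp [hX]

end Paper
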